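/- arXiv:2412.12551 — 2 statements merged into one kernel-verified Lean document; each statement's English description precedes it below -/
import Mathlib

section
/- Let ϖ be a periodic cell, Π the associated periodic domain, and a ∈ L^∞(Π) a periodic symbol. There exist constants C, C' > 0 such that for all η, μ ∈ [−π,π]: ‖P_η − P_μ‖_{L²(ϖ)→L²(ϖ)} ≤ C|η − μ|^{1/2}, and consequently ‖T_{a,η} − T_{a,μ}‖_{A²(ϖ)→A²(ϖ)} ≤ C'|η − μ|^{1/2}, where here T_{a,η} is regarded as the operator f ↦ P_η(a|_ϖ f) on A²(ϖ). -/
open Complex MeasureTheory Filter Topology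

noncomputable section

namespace BergmanToeplitz

/-- The `L²` space of a subset `Ω ⊆ ℂ` with respect to planar Lebesgue (area) measure. -/
abbrev L2 (Ω : Set ℂ) := Lp ℂ 2 (volume.restrict Ω)

/-- The subspace of `L²(Ω)` of (a.e.-classes of) functions admitting an analytic
(holomorphic) representative on `Ω`. -/
def bergmanPre (Ω : Set ℂ) : Submodule ℂ (L2 Ω) where
  carrier := {f | ∃ g : ℂ → ℂ, DifferentiableOn ℂ g Ω ∧ (f : ℂ → ℂ) =ᵐ[volume.restrict Ω] g}
  add_mem' := by
    rintro f₁ f₂ ⟨g₁, hg₁, he₁⟩ ⟨g₂, hg₂, he₂⟩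
    refine ⟨g₁ + g₂, hg₁.add hg₂, (Lp.coeFn_add f₁ f₂).trans ?_⟩
    filter_upwards [he₁, he₂] with z h₁ h₂
    simp [h₁, h₂]
  zero_mem' := ⟨0, differentiableOn_const 0, by
    simpa using Lp.coeFn_zero ℂ 2 (volume.restrict _)⟩
  smul_mem' := by
    rintro c f ⟨g, hg, he⟩
    refine ⟨c • g, hg.const_smul c, (Lp.coeFn_smul c f).trans ?_⟩
    filter_upwards [he] with z h
    simp [h]

/-- The Bergman space `A²(Ω)` of a domain `Ω ⊆ ℂ`, as a closed subspace of `L²(Ω)`.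
For an open set `Ω` the subspace `bergmanPre Ω` is already closed in `L²(Ω)`,
so taking the topological closure does not change it. -/
def Bergman (Ω : Set ℂ) : Submodule ℂ (L2 Ω) := (bergmanPre Ω).topologicalClosure

instance (Ω : Set ℂ) : CompleteSpace (Bergman Ω) :=
  (Submodule.isClosed_topologicalClosure _).completeSpace_coe

/-- Multiplication by an essentially bounded symbol, as a bounded operator on `L²`. -/
def mulOp {μ : Measure ℂ} (a : ℂ → ℂ) (ha : MemLp a ⊤ μ) : Lp ℂ 2 μ →L[ℂ] Lp ℂ 2 μ :=
  LinearMap.mkContinuous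
    { toFun := fun f => (((Lp.memLp f).smul ha).toLp (a • (f : ℂ → ℂ)))
      map_add' := by
        intro f g
        rw [← MemLp.toLp_add]
        exact (MemLp.toLp_eq_toLp_iff ((Lp.memLp (f + g)).smul ha) _).2 <|
          ((EventuallyEq.refl _ a).smul (Lp.coeFn_add f g)).trans
            (EventuallyEq.of_eq (by funext z; simp [Pi.smul_apply', mul_add]))
      map_smul' := by
        intro c f
        rw [RingHom.id_apply, ← MemLp.toLp_const_smul]
        exact (MemLp.toLp_eq_toLp_iff ((Lp.memLp (c • f)).smul ha) _).2 <|
          ((EventuallyEq.refl _ a).smul (Lp.coeFn_smul c f)).trans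
            (EventuallyEq.of_eq (by
              funext z
              simp only [Pi.smul_apply', Pi.smul_apply, smul_eq_mul, Pi.mul_apply]
              ring)) }
    (ENNReal.toReal (eLpNorm a ⊤ μ))
    (by
      intro f
      simp only [LinearMap.coe_mk, AddHom.coe_mk]
      rw [Lp.norm_toLp, Lp.norm_def]
      rw [← ENNReal.toReal_mul]
      refine ENNReal.toReal_mono (ENNReal.mul_ne_top ha.2.ne (Lp.memLp f).2.ne) ?_
      exact eLpNorm_smul_le_eLpNorm_top_mul_eLpNorm 2 (Lp.aestronglyMeasurable f) a)

/-- The Toeplitz operator `T_a : A²(Ω) → A²(Ω)` with bounded symbol `a`,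
`T_a f = P_Ω (a f)`, where `P_Ω` is the Bergman (orthogonal) projection. -/
def toeplitz (Ω : Set ℂ) (a : ℂ → ℂ) (ha : MemLp a ⊤ (volume.restrict Ω)) :
    ↥(Bergman Ω) →L[ℂ] ↥(Bergman Ω) :=
  (Bergman Ω).orthogonalProjectionOnto.comp ((mulOp a ha).comp (Bergman Ω).subtypeL)

/-- A bounded operator is Fredholm if its kernel is finite dimensional, its range is closed,
and its range has finite codimension. -/
def IsFredholm {H : Type*} [NormedAddCommGroup H] [NormedSpace ℂ H] (T : H →L[ℂ] H) : Prop :=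
  FiniteDimensional ℂ (LinearMap.ker (T : H →ₗ[ℂ] H)) ∧ IsClosed ((LinearMap.range (T : H →ₗ[ℂ] H) : Submodule ℂ H) : Set H) ∧
    FiniteDimensional ℂ (H ⧸ (LinearMap.range (T : H →ₗ[ℂ] H) : Submodule ℂ H))

/-- The essential spectrum of a bounded operator: the set of `z ∈ ℂ` such that `T - z·I`
is not Fredholm. -/
def essSpectrum {H : Type*} [NormedAddCommGroup H] [NormedSpace ℂ H] (T : H →L[ℂ] H) : Set ℂ :=
  {z | ¬ IsFredholm (T - z • (1 : H →L[ℂ] H))}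



/-- A periodic cell: a bounded Lipschitz domain contained in the strip
`(-1/2,1/2) × (-M,M)`, whose boundary meets the vertical lines `Re z = ±1/2`
exactly in the segments `{±1/2} × [a,b]`. -/
structure PeriodicCell where
  carrier : Set ℂ
  isOpen : IsOpen carrier
  isConnected : IsConnected carrier
  M : ℝ
  M_pos : 0 < M
  subset_strip : carrier ⊆ {z : ℂ | z.re ∈ Set.Ioo (-(1/2) : ℝ) (1/2) ∧ z.im ∈ Set.Ioo (-M) M}
  a : ℝ
  b : ℝ
  a_lt_b : a < b
  lipschitz_boundary : ∃ (K : NNReal) (γ : ℝ → ℂ), LipschitzWith K γ ∧ Function.Periodic γ 1 ∧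
    Set.InjOn γ (Set.Ico 0 1) ∧ Set.range γ = frontier carrier
  boundary_right : frontier carrier ∩ {z : ℂ | z.re = 1/2}
      = {z : ℂ | z.re = 1/2 ∧ z.im ∈ Set.Icc a b}
  boundary_left : frontier carrier ∩ {z : ℂ | z.re = -(1/2)}
      = {z : ℂ | z.re = -(1/2) ∧ z.im ∈ Set.Icc a b}

/-- The periodic domain `Π`: the interior of the union of the closures of the
integer translates of the periodic cell. -/
def PeriodicCell.domain (P : PeriodicCell) : Set ℂ :=
  interior (⋃ m : ℤ, closure ((fun z => z + (m : ℂ)) '' P.carrier))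

lemma PeriodicCell.isOpen_domain (P : PeriodicCell) : IsOpen P.domain := isOpen_interior

lemma PeriodicCell.cell_subset_domain (P : PeriodicCell) : P.carrier ⊆ P.domain :=
  interior_maximal
    (fun z hz => Set.mem_iUnion.2 ⟨0, subset_closure ⟨z, hz, by simp⟩⟩) P.isOpen

/-- A symbol `a ∈ L^∞(Π)` is periodic if `a(z) = a(z+1)` for a.e. `z ∈ Π`. -/
def PeriodicSymbol (P : PeriodicCell) (a : ℂ → ℂ) : Prop :=
  ∀ᵐ z ∂(volume.restrict P.domain), a z = a (z + 1)



/-- The subspace `A²_{η,ext}` of `L²(Ω)` of functions extending analytically to a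
neighbourhood `U` (inside the periodic domain `Π`) of `closure Ω ∩ Π`, satisfying the
quasiperiodic boundary condition `g(1/2 + iy) = e^{iη} g(-1/2 + iy)` for `y ∈ (c,d)`. -/
def quasiPre (Ω Pdom : Set ℂ) (hPdom : IsOpen Pdom) (c d η : ℝ) : Submodule ℂ (L2 Ω) where
  carrier := {f | ∃ (U : Set ℂ) (g : ℂ → ℂ), IsOpen U ∧ U ⊆ Pdom ∧ closure Ω ∩ Pdom ⊆ U ∧
    DifferentiableOn ℂ g U ∧ (f : ℂ → ℂ) =ᵐ[volume.restrict Ω] g ∧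
    ∀ y ∈ Set.Ioo c d, g (1/2 + y * I) = Complex.exp (η * I) * g (-(1/2) + y * I)}
  add_mem' := by
    rintro f₁ f₂ ⟨U₁, g₁, hU₁, hU₁P, hsub₁, hg₁, he₁, hbc₁⟩
      ⟨U₂, g₂, hU₂, hU₂P, hsub₂, hg₂, he₂, hbc₂⟩
    refine ⟨U₁ ∩ U₂, g₁ + g₂, hU₁.inter hU₂, Set.inter_subset_left.trans hU₁P,
      Set.subset_inter hsub₁ hsub₂,
      (hg₁.mono Set.inter_subset_left).add (hg₂.mono Set.inter_subset_right),
      (Lp.coeFn_add f₁ f₂).trans ?_, ?_⟩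
    · filter_upwards [he₁, he₂] with z h₁ h₂
      simp [h₁, h₂]
    · intro y hy
      simp only [Pi.add_apply, hbc₁ y hy, hbc₂ y hy]
      ring
  zero_mem' := ⟨Pdom, 0, hPdom, le_refl _, Set.inter_subset_right, differentiableOn_const 0,
    by simpa using Lp.coeFn_zero ℂ 2 (volume.restrict Ω), fun y _ => by simp⟩
  smul_mem' := by
    rintro c₀ f ⟨U, g, hU, hUP, hsub, hg, he, hbc⟩
    refine ⟨U, c₀ • g, hU, hUP, hsub, hg.const_smul c₀, (Lp.coeFn_smul c₀ f).trans ?_, ?_⟩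
    · filter_upwards [he] with z h
      simp [h]
    · intro y hy
      simp only [Pi.smul_apply, hbc y hy, smul_eq_mul]
      ring


/-- The quasiperiodic Bergman space `A²_η(ϖ)`: the closure in `A²(ϖ)` of `A²_{η,ext}(ϖ)`. -/
def quasiBergman (P : PeriodicCell) (η : ℝ) : Submodule ℂ (L2 P.carrier) :=
  (quasiPre P.carrier P.domain P.isOpen_domain P.a P.b η).topologicalClosure

instance (P : PeriodicCell) (η : ℝ) : CompleteSpace (quasiBergman P η) :=
  (Submodule.isClosed_topologicalClosure _).completeSpace_coe

lemma quasiPre_le_bergmanPre (P : PeriodicCell) (η : ℝ) :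
    quasiPre P.carrier P.domain P.isOpen_domain P.a P.b η ≤ bergmanPre P.carrier := by
  rintro f ⟨U, g, hU, hUP, hsub, hg, he, hbc⟩
  exact ⟨g, hg.mono fun z hz => hsub ⟨subset_closure hz, P.cell_subset_domain hz⟩, he⟩

lemma quasiBergman_le_bergman (P : PeriodicCell) (η : ℝ) :
    quasiBergman P η ≤ Bergman P.carrier :=
  Submodule.topologicalClosure_mono (quasiPre_le_bergmanPre P η)

lemma memℒp_restrict_of_subset {a : ℂ → ℂ} {p : ENNReal} {s t : Set ℂ} (hst : s ⊆ t)
    (hs : MeasurableSet s) (ha : MemLp a p (volume.restrict t)) :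
    MemLp a p (volume.restrict s) := by
  have h := ha.restrict s
  rwa [Measure.restrict_restrict hs, Set.inter_eq_self_of_subset_left hst] at h

/-- The operator `T_{a,η} : A²_η(ϖ) → A²_η(ϖ)`, `T_{a,η} f = P_η (a|_ϖ · f)`. -/
def toeplitzFiber (P : PeriodicCell) (a : ℂ → ℂ)
    (ha : MemLp a ⊤ (volume.restrict P.domain)) (η : ℝ) :
    ↥(quasiBergman P η) →L[ℂ] ↥(quasiBergman P η) :=
  (quasiBergman P η).orthogonalProjectionOnto.comp
    ((mulOp a (memℒp_restrict_of_subset P.cell_subset_domain P.isOpen.measurableSet ha)).comp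
      (quasiBergman P η).subtypeL)

/-- The orthogonal projection `P_η : L²(ϖ) → A²_η(ϖ)`, as an operator on `L²(ϖ)`. -/
def quasiProj (P : PeriodicCell) (η : ℝ) : L2 P.carrier →L[ℂ] L2 P.carrier :=
  (quasiBergman P η).subtypeL.comp (quasiBergman P η).orthogonalProjectionOnto

/-- The operator `f ↦ P_η (a|_ϖ · f)` regarded as an operator on `A²(ϖ)`. -/
def toeplitzFiberOnBergman (P : PeriodicCell) (a : ℂ → ℂ)
    (ha : MemLp a ⊤ (volume.restrict P.domain)) (η : ℝ) :
    ↥(Bergman P.carrier) →L[ℂ] ↥(Bergman P.carrier) :=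
  ContinuousLinearMap.codRestrict
    (((quasiBergman P η).subtypeL.comp (quasiBergman P η).orthogonalProjectionOnto).comp
      ((mulOp a (memℒp_restrict_of_subset P.cell_subset_domain P.isOpen.measurableSet ha)).comp
        (Bergman P.carrier).subtypeL))
    (Bergman P.carrier)
    (fun f => quasiBergman_le_bergman P η (SetLike.coe_mem _))

section Holder

local notation "⟪" x ", " y "⟫" => @inner ℂ _ _ x y

/-- Abstract two-subspace projection estimate in a complex Hilbert-type setting. -/
lemma proj_diff_norm_le {H : Type*} [NormedAddCommGroup H] [InnerProductSpace ℂ H]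
    (E F : Submodule ℂ H) [CompleteSpace E] [CompleteSpace F] {δ δ' : ℝ}
    (hδ : 0 ≤ δ) (hδ' : 0 ≤ δ')
    (hE : ∀ x ∈ E, ‖x - (F.orthogonalProjectionOnto x : H)‖ ≤ δ * ‖x‖)
    (hF : ∀ y ∈ F, ‖y - (E.orthogonalProjectionOnto y : H)‖ ≤ δ' * ‖y‖)
    (x : H) :
    ‖(E.orthogonalProjectionOnto x : H) - (F.orthogonalProjectionOnto x : H)‖ ≤ (δ + δ') * ‖x‖ := by
  set u : H := (E.orthogonalProjectionOnto x : H) with hu_def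
  set y : H := x - u with hy_def
  set w : H := (F.orthogonalProjectionOnto y : H) with hw_def
  have bddE : BddBelow (Set.range fun v : E => ‖x - (v : H)‖) :=
    ⟨0, by rintro r ⟨v, rfl⟩; exact norm_nonneg _⟩
  have hu_norm : ‖u‖ ≤ ‖x‖ := by
    calc ‖u‖ = ‖E.orthogonalProjectionOnto x‖ := rfl
    _ ≤ ‖E.orthogonalProjectionOnto‖ * ‖x‖ := (E.orthogonalProjectionOnto).le_opNorm x
    _ ≤ 1 * ‖x‖ := mul_le_mul_of_nonneg_right (Submodule.orthogonalProjectionOnto_norm_le E) (norm_nonneg x)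
    _ = ‖x‖ := one_mul _
  have hy_norm : ‖y‖ ≤ ‖x‖ := by
    rw [hy_def, hu_def, ← Submodule.starProjection_apply, Submodule.starProjection_minimal]
    have := ciInf_le bddE (0 : E)
    simpa using this
  have hsplit : (F.orthogonalProjectionOnto x : H) = (F.orthogonalProjectionOnto u : H) + w := by
    have hx : x = u + y := by rw [hy_def]; abel
    rw [hw_def]
    rw [show F.orthogonalProjectionOnto x = F.orthogonalProjectionOnto (u + y) by rw [← hx]]
    rw [map_add, Submodule.coe_add]
  have h1 : ‖u - (F.orthogonalProjectionOnto u : H)‖ ≤ δ * ‖x‖ :=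
    (hE u (SetLike.coe_mem _)).trans (mul_le_mul_of_nonneg_left hu_norm hδ)
  have hyperp : y ∈ Eᗮ := by
    have := E.sub_starProjection_mem_orthogonal x
    rw [Submodule.starProjection_apply] at this
    exact this
  have h2 : ‖w‖ ≤ δ' * ‖x‖ := by
    have hinner1 : ⟪y, w⟫ = (‖w‖ : ℂ) ^ 2 := by
      have h0 : ⟪y - w, w⟫ = 0 := by
        have := F.starProjection_inner_eq_zero y w (SetLike.coe_mem _)
        rw [Submodule.starProjection_apply] at this
        exact this
      rw [inner_sub_left, sub_eq_zero] at h0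
      rw [h0, inner_self_eq_norm_sq_to_K]; norm_cast
    have hinner2 : ⟪y, (E.orthogonalProjectionOnto w : H)⟫ = 0 := by
      rw [inner_eq_zero_symm]
      exact hyperp _ (SetLike.coe_mem _)
    have hsq : ‖w‖ ^ 2 ≤ ‖y‖ * (δ' * ‖w‖) := by
      have e1 : ‖w‖ ^ 2 = ‖⟪y, w - (E.orthogonalProjectionOnto w : H)⟫‖ := by
        rw [inner_sub_right, hinner2, sub_zero, hinner1]
        rw [norm_pow]
        simp
      rw [e1]
      exact (norm_inner_le_norm _ _).trans
        (mul_le_mul_of_nonneg_left (hF w (SetLike.coe_mem _)) (norm_nonneg _))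
    have hw2 : ‖w‖ ≤ δ' * ‖y‖ := by
      rcases (norm_nonneg w).eq_or_lt with h0 | h0
      · rw [← h0]; positivity
      · nlinarith [hsq]
    exact hw2.trans (mul_le_mul_of_nonneg_left hy_norm hδ')
  calc ‖u - (F.orthogonalProjectionOnto x : H)‖
      = ‖(u - (F.orthogonalProjectionOnto u : H)) - w‖ := by rw [hsplit, sub_add_eq_sub_sub]
    _ ≤ ‖u - (F.orthogonalProjectionOnto u : H)‖ + ‖w‖ := norm_sub_le _ _
    _ ≤ δ * ‖x‖ + δ' * ‖x‖ := add_le_add h1 h2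
    _ = (δ + δ') * ‖x‖ := by ring

/-- The quasiperiodicity-shifting multiplier `z ↦ e^{itz}`. -/
def mult (t : ℝ) : ℂ → ℂ := fun z => Complex.exp (t * z * I)

lemma norm_le_of_mem_cell (P : PeriodicCell) {z : ℂ} (hz : z ∈ P.carrier) :
    ‖z‖ ≤ 1 + P.M := by
  obtain ⟨h1, h2⟩ := P.subset_strip hz
  have habs := Complex.norm_le_abs_re_add_abs_im z
  have hre : |z.re| ≤ 1/2 := abs_le.2 ⟨h1.1.le, h1.2.le⟩
  have him : |z.im| ≤ P.M := abs_le.2 ⟨h2.1.le, h2.2.le⟩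
  linarith

lemma mult_memℒp (P : PeriodicCell) (t : ℝ) :
    MemLp (mult t) ⊤ (volume.restrict P.carrier) := by
  refine memLp_top_of_bound
    ((Complex.continuous_exp.comp (by continuity)).aestronglyMeasurable)
    (Real.exp (|t| * (1 + P.M))) ?_
  filter_upwards [ae_restrict_mem P.isOpen.measurableSet] with z hz
  have hnz : ‖z‖ ≤ 1 + P.M := norm_le_of_mem_cell P hz
  show ‖Complex.exp ((t : ℂ) * z * I)‖ ≤ _
  rw [Complex.norm_exp]
  apply Real.exp_le_exp.2
  have hre : ((t : ℂ) * z * I).re = -(t * z.im) := by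
    simp [Complex.mul_re, Complex.mul_im]
  rw [hre]
  calc -(t * z.im) ≤ |t * z.im| := neg_le_abs _
  _ = |t| * |z.im| := abs_mul _ _
  _ ≤ |t| * (1 + P.M) := by
      apply mul_le_mul_of_nonneg_left _ (abs_nonneg t)
      have := (Complex.abs_im_le_norm z)
      linarith
  _ = _ := rfl

lemma mulOp_coeFn {ν : Measure ℂ} (b : ℂ → ℂ) (hb : MemLp b ⊤ ν) (f : Lp ℂ 2 ν) :
    (mulOp b hb f : ℂ → ℂ) =ᵐ[ν] b • (f : ℂ → ℂ) :=
  MemLp.coeFn_toLp ((Lp.memLp f).smul hb)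

lemma mulOp_mult_mem (P : PeriodicCell) (η t : ℝ) {f : L2 P.carrier}
    (hf : f ∈ quasiBergman P η) :
    mulOp (mult t) (mult_memℒp P t) f ∈ quasiBergman P (η + t) := by
  have hdiff : Differentiable ℂ (mult t) :=
    Complex.differentiable_exp.comp ((differentiable_id.const_mul (t : ℂ)).mul_const I)
  have key : quasiBergman P η ≤
      (quasiBergman P (η + t)).comap
        (mulOp (mult t) (mult_memℒp P t)).toLinearMap := by
    refine Submodule.topologicalClosure_minimal _ ?_ ?_
    · intro g hg
      obtain ⟨U, G, hU, hUP, hsub, hG, he, hbc⟩ := hg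
      apply Submodule.mem_comap.2
      apply Submodule.le_topologicalClosure
      refine ⟨U, fun z => mult t z * G z, hU, hUP, hsub,
        (hdiff.differentiableOn).mul hG, ?_, ?_⟩
      · refine (mulOp_coeFn _ _ _).trans ?_
        filter_upwards [he] with z hz
        simp only [Pi.smul_apply', smul_eq_mul, Pi.smul_apply]
        rw [hz]
      · intro y hy
        have hb := hbc y hy
        show mult t (1/2 + y * I) * G (1/2 + y * I)
            = Complex.exp ((η + t : ℝ) * I) * (mult t (-(1/2) + y * I) * G (-(1/2) + y * I))
        rw [hb]
        simp only [mult]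
        rw [← mul_assoc, ← mul_assoc, ← Complex.exp_add, ← Complex.exp_add]
        congr 2
        push_cast
        ring
    · have : IsClosed ((quasiBergman P (η + t) : Set (L2 P.carrier))) :=
        Submodule.isClosed_topologicalClosure _
      exact this.preimage (mulOp (mult t) (mult_memℒp P t)).continuous
  exact key hf

lemma exp_sub_one_bound {w : ℂ} {A : ℝ} (hw : ‖w‖ ≤ A) :
    ‖Complex.exp w - 1‖ ≤ (2 + Real.exp A) * ‖w‖ := by
  have hexpA : (0:ℝ) < Real.exp A := Real.exp_pos A
  rcases le_or_gt ‖w‖ 1 with h | h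
  · have h2 : ‖Complex.exp w - 1‖ ≤ 2 * ‖w‖ :=
      Complex.norm_exp_sub_one_le h
    calc ‖Complex.exp w - 1‖ ≤ 2 * ‖w‖ := h2
    _ ≤ (2 + Real.exp A) * ‖w‖ := by
        nlinarith [norm_nonneg w]
  · have h1 : ‖Complex.exp w - 1‖ ≤ ‖Complex.exp w‖ + 1 := by
      calc ‖Complex.exp w - 1‖ ≤ ‖Complex.exp w‖ + ‖(1 : ℂ)‖ := norm_sub_le _ _
      _ = ‖Complex.exp w‖ + 1 := by simp
    have h2 : ‖Complex.exp w‖ ≤ Real.exp A := by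
      rw [Complex.norm_exp]
      apply Real.exp_le_exp.2
      have := Complex.abs_re_le_norm w
      calc w.re ≤ |w.re| := le_abs_self _
      _ ≤ ‖w‖ := this
      _ ≤ A := hw
    nlinarith

lemma mulOp_mult_sub_norm (P : PeriodicCell) {t : ℝ} (ht : |t| ≤ 2 * Real.pi)
    (f : L2 P.carrier) :
    ‖mulOp (mult t) (mult_memℒp P t) f - f‖ ≤
      ((2 + Real.exp (2 * Real.pi * (1 + P.M))) * (1 + P.M)) * |t| * ‖f‖ := by
  have hM : (0:ℝ) < P.M := P.M_pos
  have hbound : ∀ᵐ z ∂(volume.restrict P.carrier),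
      ‖((mulOp (mult t) (mult_memℒp P t) f - f : L2 P.carrier) : ℂ → ℂ) z‖ ≤
        (((2 + Real.exp (2 * Real.pi * (1 + P.M))) * (1 + P.M)) * |t|) * ‖(f : ℂ → ℂ) z‖ := by
    filter_upwards [Lp.coeFn_sub (mulOp (mult t) (mult_memℒp P t) f) f,
      mulOp_coeFn (mult t) (mult_memℒp P t) f,
      ae_restrict_mem P.isOpen.measurableSet] with z h1 h2 hz
    have h3 : ((mulOp (mult t) (mult_memℒp P t) f - f : L2 P.carrier) : ℂ → ℂ) z
        = (mult t z - 1) * (f : ℂ → ℂ) z := by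
      rw [h1, Pi.sub_apply, h2, Pi.smul_apply', smul_eq_mul]
      ring
    rw [h3, norm_mul]
    apply mul_le_mul_of_nonneg_right _ (norm_nonneg _)
    have hwnorm : ‖(t : ℂ) * z * I‖ ≤ 2 * Real.pi * (1 + P.M) := by
      rw [norm_mul, norm_mul, Complex.norm_I, mul_one, Complex.norm_real, Real.norm_eq_abs]
      have hz1 : ‖z‖ ≤ 1 + P.M := norm_le_of_mem_cell P hz
      have : |t| * ‖z‖ ≤ (2 * Real.pi) * (1 + P.M) :=
        mul_le_mul ht hz1 (norm_nonneg z) (by positivity)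
      linarith
    have := exp_sub_one_bound hwnorm
    have hw2 : ‖(t : ℂ) * z * I‖ = |t| * ‖z‖ := by
      rw [norm_mul, norm_mul, Complex.norm_I, mul_one, Complex.norm_real, Real.norm_eq_abs]
    calc ‖mult t z - 1‖ = ‖Complex.exp ((t : ℂ) * z * I) - 1‖ := rfl
    _ ≤ (2 + Real.exp (2 * Real.pi * (1 + P.M))) * ‖(t : ℂ) * z * I‖ := this
    _ = (2 + Real.exp (2 * Real.pi * (1 + P.M))) * (|t| * ‖z‖) := by rw [hw2]
    _ ≤ (2 + Real.exp (2 * Real.pi * (1 + P.M))) * (|t| * (1 + P.M)) := by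
        apply mul_le_mul_of_nonneg_left _ (by positivity)
        exact mul_le_mul_of_nonneg_left (norm_le_of_mem_cell P hz) (abs_nonneg t)
    _ = ((2 + Real.exp (2 * Real.pi * (1 + P.M))) * (1 + P.M)) * |t| := by ring
  exact Lp.norm_le_mul_norm_of_ae_le_mul hbound

lemma dist_to_quasiBergman (P : PeriodicCell) (η μ : ℝ) (htle : |μ - η| ≤ 2 * Real.pi)
    {f : L2 P.carrier} (hf : f ∈ quasiBergman P η) :
    ‖f - ((quasiBergman P μ).orthogonalProjectionOnto f : L2 P.carrier)‖ ≤
      ((2 + Real.exp (2 * Real.pi * (1 + P.M))) * (1 + P.M)) * |μ - η| * ‖f‖ := by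
  have hmem : mulOp (mult (μ - η)) (mult_memℒp P (μ - η)) f ∈ quasiBergman P μ := by
    have := mulOp_mult_mem P η (μ - η) hf
    rwa [show η + (μ - η) = μ by ring] at this
  rw [← Submodule.starProjection_apply, Submodule.starProjection_minimal]
  refine le_trans
    (ciInf_le ⟨0, by rintro r ⟨v, rfl⟩; exact norm_nonneg _⟩
      (⟨_, hmem⟩ : quasiBergman P μ)) ?_
  have h := mulOp_mult_sub_norm P htle f
  rw [norm_sub_rev] at h
  exact h

end Holder

/-- **Lemma (Hölder continuity of the projections `P_η` and of `T_{a,η}`).**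
There are `C, C' > 0` such that for all `η, μ ∈ [-π,π]`,
`‖P_η - P_μ‖_{L²(ϖ)→L²(ϖ)} ≤ C|η-μ|^{1/2}` and, regarding `f ↦ P_η(a|_ϖ f)` as an operator
on `A²(ϖ)`, `‖T_{a,η} - T_{a,μ}‖_{A²(ϖ)→A²(ϖ)} ≤ C'|η-μ|^{1/2}`. -/
theorem projection_holder_continuity (P : PeriodicCell) (a : ℂ → ℂ)
    (ha : MemLp a ⊤ (volume.restrict P.domain)) (hper : PeriodicSymbol P a) :
    ∃ C C' : ℝ, 0 < C ∧ 0 < C' ∧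
      ∀ η ∈ Set.Icc (-Real.pi) Real.pi, ∀ μ ∈ Set.Icc (-Real.pi) Real.pi,
        ‖quasiProj P η - quasiProj P μ‖ ≤ C * Real.sqrt |η - μ| ∧
        ‖toeplitzFiberOnBergman P a ha η - toeplitzFiberOnBergman P a ha μ‖ ≤
          C' * Real.sqrt |η - μ| := by
  have hM : (0:ℝ) < P.M := P.M_pos
  obtain ⟨K, hK_def⟩ : ∃ K : ℝ,
      K = (2 + Real.exp (2 * Real.pi * (1 + P.M))) * (1 + P.M) := ⟨_, rfl⟩
  have hK : 0 < K := by
    have := Real.exp_pos (2 * Real.pi * (1 + P.M))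
    rw [hK_def]; nlinarith
  obtain ⟨C, hC_def⟩ : ∃ C : ℝ, C = 2 * K * Real.sqrt (2 * Real.pi) + 1 := ⟨_, rfl⟩
  have hsqrt2pi : 0 ≤ Real.sqrt (2 * Real.pi) := Real.sqrt_nonneg _
  have hC : 0 < C := by rw [hC_def]; nlinarith
  obtain ⟨Na, hNa_def⟩ : ∃ Na : ℝ, Na = ‖mulOp a (memℒp_restrict_of_subset
    P.cell_subset_domain P.isOpen.measurableSet ha)‖ := ⟨_, rfl⟩
  have hNa : 0 ≤ Na := hNa_def ▸ norm_nonneg _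
  refine ⟨C, C * (Na + 1), hC, by positivity, ?_⟩
  intro η hη μ hμ
  rw [Set.mem_Icc] at hη hμ
  have hpi : 0 < Real.pi := Real.pi_pos
  have htle : |η - μ| ≤ 2 * Real.pi := by
    rw [abs_sub_le_iff]; constructor <;> linarith [hη.1, hη.2, hμ.1, hμ.2]
  have hd0 : 0 ≤ Real.sqrt |η - μ| := Real.sqrt_nonneg _
  have hbd : 2 * K * |η - μ| ≤ C * Real.sqrt |η - μ| := by
    have h1 : |η - μ| = Real.sqrt |η - μ| * Real.sqrt |η - μ| :=
      (Real.mul_self_sqrt (abs_nonneg _)).symm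
    have h2 : Real.sqrt |η - μ| ≤ Real.sqrt (2 * Real.pi) := Real.sqrt_le_sqrt htle
    calc 2 * K * |η - μ| = 2 * K * (Real.sqrt |η - μ| * Real.sqrt |η - μ|) := by rw [← h1]
    _ ≤ 2 * K * (Real.sqrt (2 * Real.pi) * Real.sqrt |η - μ|) := by
        apply mul_le_mul_of_nonneg_left
          (mul_le_mul_of_nonneg_right h2 hd0) (by positivity)
    _ = (2 * K * Real.sqrt (2 * Real.pi)) * Real.sqrt |η - μ| := by ring
    _ ≤ C * Real.sqrt |η - μ| := by
        apply mul_le_mul_of_nonneg_right _ hd0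
        rw [hC_def]; linarith
  have hmain : ∀ g : L2 P.carrier,
      ‖(quasiProj P η - quasiProj P μ) g‖ ≤ (2 * K * |η - μ|) * ‖g‖ := by
    intro g
    have heq : (quasiProj P η - quasiProj P μ) g
        = ((quasiBergman P η).orthogonalProjectionOnto g : L2 P.carrier)
          - ((quasiBergman P μ).orthogonalProjectionOnto g : L2 P.carrier) := rfl
    rw [heq]
    have hE : ∀ x ∈ quasiBergman P η,
        ‖x - ((quasiBergman P μ).orthogonalProjectionOnto x : L2 P.carrier)‖
          ≤ (K * |η - μ|) * ‖x‖ := by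
      intro x hx
      have h := dist_to_quasiBergman P η μ (by rwa [abs_sub_comm]) hx
      rw [abs_sub_comm μ η, ← hK_def] at h
      exact h
    have hF : ∀ x ∈ quasiBergman P μ,
        ‖x - ((quasiBergman P η).orthogonalProjectionOnto x : L2 P.carrier)‖
          ≤ (K * |η - μ|) * ‖x‖ := by
      intro x hx
      have h := dist_to_quasiBergman P μ η htle hx
      rw [← hK_def] at h
      exact h
    have := proj_diff_norm_le (quasiBergman P η) (quasiBergman P μ)
      (by positivity) (by positivity) hE hF g
    calc ‖((quasiBergman P η).orthogonalProjectionOnto g : L2 P.carrier)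
          - ((quasiBergman P μ).orthogonalProjectionOnto g : L2 P.carrier)‖
        ≤ (K * |η - μ| + K * |η - μ|) * ‖g‖ := this
      _ = (2 * K * |η - μ|) * ‖g‖ := by ring
  have part1 : ‖quasiProj P η - quasiProj P μ‖ ≤ C * Real.sqrt |η - μ| := by
    apply ContinuousLinearMap.opNorm_le_bound _ (by positivity)
    intro g
    exact (hmain g).trans (mul_le_mul_of_nonneg_right hbd (norm_nonneg g))
  refine ⟨part1, ?_⟩
  apply ContinuousLinearMap.opNorm_le_bound _ (by positivity)
  intro f
  have key : ((toeplitzFiberOnBergman P a ha η - toeplitzFiberOnBergman P a ha μ) f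
        : L2 P.carrier)
      = (quasiProj P η - quasiProj P μ)
          ((mulOp a (memℒp_restrict_of_subset P.cell_subset_domain
            P.isOpen.measurableSet ha)) (f : L2 P.carrier)) := rfl
  calc ‖(toeplitzFiberOnBergman P a ha η - toeplitzFiberOnBergman P a ha μ) f‖
      = ‖(quasiProj P η - quasiProj P μ)
          ((mulOp a (memℒp_restrict_of_subset P.cell_subset_domain
            P.isOpen.measurableSet ha)) (f : L2 P.carrier))‖ := by
        rw [← key]; rfl
    _ ≤ (C * Real.sqrt |η - μ|) * ‖(mulOp a (memℒp_restrict_of_subset P.cell_subset_domain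
          P.isOpen.measurableSet ha)) (f : L2 P.carrier)‖ := by
        exact le_trans ((quasiProj P η - quasiProj P μ).le_opNorm _)
          (mul_le_mul_of_nonneg_right part1 (norm_nonneg _))
    _ ≤ (C * Real.sqrt |η - μ|) * (Na * ‖f‖) := by
        apply mul_le_mul_of_nonneg_left _ (by positivity)
        rw [hNa_def]
        exact (mulOp a _).le_opNorm _
    _ ≤ (C * (Na + 1)) * Real.sqrt |η - μ| * ‖f‖ := by
        have h0 : 0 ≤ C * Real.sqrt |η - μ| * ‖f‖ := by positivity
        nlinarith [norm_nonneg f]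


end BergmanToeplitz
end
end

section
/- Let H be a complex Hilbert space, let ε ∈ (0,1], let J : H → H be a bounded invertible linear operator with ‖I − J‖ ≤ ε and ‖I − J⁻¹‖ ≤ ε, and let X, Y be closed subspaces of H such that J maps X bijectively onto Y. Then the orthogonal projections P_X and P_Y of H onto X and Y satisfy ‖P_X − P_Y‖ ≤ 8√ε. -/
open MeasureTheory ContinuousLinearMap

/-- **Abstract projection perturbation estimate.**
Let `H` be a complex Hilbert space, `ε ∈ (0,1]`, `J : H → H` a bounded invertible operator
with `‖I - J‖ ≤ ε` and `‖I - J⁻¹‖ ≤ ε`, and let `X`, `Y` be closed subspaces such that `J`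
maps `X` bijectively onto `Y`. Then `‖P_X - P_Y‖ ≤ 8√ε` for the orthogonal projections. -/
theorem projection_perturbation {H : Type*} [NormedAddCommGroup H] [InnerProductSpace ℂ H]
    [CompleteSpace H] (ε : ℝ) (hε : ε ∈ Set.Ioc (0 : ℝ) 1) (J : H ≃L[ℂ] H)
    (hJ : ‖(1 : H →L[ℂ] H) - (J : H →L[ℂ] H)‖ ≤ ε)
    (hJinv : ‖(1 : H →L[ℂ] H) - (J.symm : H →L[ℂ] H)‖ ≤ ε)
    (X Y : Submodule ℂ H) (hX : IsClosed (X : Set H)) (hY : IsClosed (Y : Set H))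
    (hXY : ⇑J '' (X : Set H) = (Y : Set H)) :
    haveI : CompleteSpace ↥X := hX.completeSpace_coe
    haveI : CompleteSpace ↥Y := hY.completeSpace_coe
    ‖X.subtypeL.comp X.orthogonalProjectionOnto - Y.subtypeL.comp Y.orthogonalProjectionOnto‖ ≤
      8 * Real.sqrt ε := by
  haveI : CompleteSpace ↥X := hX.completeSpace_coe
  haveI : CompleteSpace ↥Y := hY.completeSpace_coe
  obtain ⟨hε0, hε1⟩ := hε
  set P : H →L[ℂ] H := X.subtypeL.comp X.orthogonalProjectionOnto with hP
  set Q : H →L[ℂ] H := Y.subtypeL.comp Y.orthogonalProjectionOnto with hQ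
  -- distance estimates
  have distY : ∀ v ∈ X, ‖v - Q v‖ ≤ ε * ‖v‖ := by
    intro v hv
    have hmem : J v ∈ Y := by
      have : J v ∈ (Y : Set H) := by rw [← hXY]; exact Set.mem_image_of_mem _ hv
      exact this
    have h1 : ‖v - Q v‖ ≤ ‖v - (⟨J v, hmem⟩ : Y)‖ := by
      have := Submodule.starProjection_minimal (U := Y) v
      simp only [hQ, comp_apply, Submodule.subtypeL_apply]
      refine this.trans_le ?_
      exact ciInf_le ⟨0, fun x ⟨y, hy⟩ => hy ▸ norm_nonneg _⟩ (⟨J v, hmem⟩ : Y)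
    calc ‖v - Q v‖ ≤ ‖v - J v‖ := h1
      _ = ‖((1 : H →L[ℂ] H) - (J : H →L[ℂ] H)) v‖ := by simp
      _ ≤ ‖(1 : H →L[ℂ] H) - (J : H →L[ℂ] H)‖ * ‖v‖ := le_opNorm _ _
      _ ≤ ε * ‖v‖ := by gcongr
  have distX : ∀ v ∈ Y, ‖v - P v‖ ≤ ε * ‖v‖ := by
    intro v hv
    have hmem : J.symm v ∈ X := by
      obtain ⟨x, hx, hxv⟩ : v ∈ ⇑J '' (X : Set H) := hXY ▸ hv
      simpa [← hxv] using hx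
    have h1 : ‖v - P v‖ ≤ ‖v - (⟨J.symm v, hmem⟩ : X)‖ := by
      have := Submodule.starProjection_minimal (U := X) v
      simp only [hP, comp_apply, Submodule.subtypeL_apply]
      refine this.trans_le ?_
      exact ciInf_le ⟨0, fun x ⟨y, hy⟩ => hy ▸ norm_nonneg _⟩ (⟨J.symm v, hmem⟩ : X)
    calc ‖v - P v‖ ≤ ‖v - J.symm v‖ := h1
      _ = ‖((1 : H →L[ℂ] H) - (J.symm : H →L[ℂ] H)) v‖ := by simp
      _ ≤ ‖(1 : H →L[ℂ] H) - (J.symm : H →L[ℂ] H)‖ * ‖v‖ := le_opNorm _ _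
      _ ≤ ε * ‖v‖ := by gcongr
  have hPnorm : ∀ x : H, ‖P x‖ ≤ ‖x‖ := by
    intro x
    simp only [hP, comp_apply, Submodule.subtypeL_apply]
    calc ‖(X.orthogonalProjectionOnto x : H)‖ = ‖X.orthogonalProjectionOnto x‖ := rfl
      _ ≤ ‖X.orthogonalProjectionOnto‖ * ‖x‖ := le_opNorm _ _
      _ ≤ 1 * ‖x‖ := by
          exact mul_le_mul_of_nonneg_right (Submodule.orthogonalProjectionOnto_norm_le X) (norm_nonneg x)
      _ = ‖x‖ := one_mul _
  have hQnorm : ∀ x : H, ‖Q x‖ ≤ ‖x‖ := by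
    intro x
    simp only [hQ, comp_apply, Submodule.subtypeL_apply]
    calc ‖(Y.orthogonalProjectionOnto x : H)‖ = ‖Y.orthogonalProjectionOnto x‖ := rfl
      _ ≤ ‖Y.orthogonalProjectionOnto‖ * ‖x‖ := le_opNorm _ _
      _ ≤ 1 * ‖x‖ := by
          exact mul_le_mul_of_nonneg_right (Submodule.orthogonalProjectionOnto_norm_le Y) (norm_nonneg x)
      _ = ‖x‖ := one_mul _
  have hPmem : ∀ x : H, P x ∈ X := fun x => (X.orthogonalProjectionOnto x).2
  have hQmem : ∀ x : H, Q x ∈ Y := fun x => (Y.orthogonalProjectionOnto x).2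
  -- ‖(1-Q)∘P‖ ≤ ε
  have h1 : ‖((1 : H →L[ℂ] H) - Q) ∘L P‖ ≤ ε := by
    apply opNorm_le_bound _ hε0.le
    intro x
    have := distY (P x) (hPmem x)
    simp only [comp_apply, sub_apply, one_apply]
    calc ‖P x - Q (P x)‖ ≤ ε * ‖P x‖ := this
      _ ≤ ε * ‖x‖ := by have := hPnorm x; nlinarith
  have h2 : ‖((1 : H →L[ℂ] H) - P) ∘L Q‖ ≤ ε := by
    apply opNorm_le_bound _ hε0.le
    intro x
    have := distX (Q x) (hQmem x)
    simp only [comp_apply, sub_apply, one_apply]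
    calc ‖Q x - P (Q x)‖ ≤ ε * ‖Q x‖ := this
      _ ≤ ε * ‖x‖ := by have := hQnorm x; nlinarith
  -- self-adjointness
  have hPsa : IsSelfAdjoint P := isSelfAdjoint_starProjection X
  have hQsa : IsSelfAdjoint Q := isSelfAdjoint_starProjection Y
  have hadj : ‖P ∘L ((1 : H →L[ℂ] H) - Q)‖ = ‖((1 : H →L[ℂ] H) - Q) ∘L P‖ := by
    rw [← ContinuousLinearMap.adjoint.norm_map (((1 : H →L[ℂ] H) - Q) ∘L P)]
    congr 1
    have hone : adjoint (1 : H →L[ℂ] H) = 1 := by rw [← star_eq_adjoint, star_one]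
    rw [adjoint_comp, map_sub, hone, hPsa.adjoint_eq, hQsa.adjoint_eq]
  have hdecomp : P - Q = P ∘L ((1 : H →L[ℂ] H) - Q) - ((1 : H →L[ℂ] H) - P) ∘L Q := by
    ext x
    simp [comp_apply, sub_apply, one_apply, map_sub]
  have key : ‖P - Q‖ ≤ 2 * ε := by
    rw [hdecomp]
    calc ‖P ∘L ((1 : H →L[ℂ] H) - Q) - ((1 : H →L[ℂ] H) - P) ∘L Q‖
        ≤ ‖P ∘L ((1 : H →L[ℂ] H) - Q)‖ + ‖((1 : H →L[ℂ] H) - P) ∘L Q‖ := norm_sub_le _ _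
      _ ≤ ε + ε := by rw [hadj]; exact add_le_add h1 h2
      _ = 2 * ε := by ring
  refine key.trans ?_
  have hsq : ε ≤ Real.sqrt ε := by
    rw [Real.le_sqrt hε0.le hε0.le]
    nlinarith
  nlinarith [Real.sqrt_nonneg ε]
end
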